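/- (Compactness) Let Y^T_{f_k} := {g ∈ B^T_M | f_k ≤ g} and e ∈ {c, K3, N3, Nve}. Then Φ_e is compact on Y^T_{f_k}: for every Z ⊆ Y^T_{f_k}, if Φ_e(h₁) ∩ … ∩ Φ_e(hₙ) ≠ ∅ for all n ∈ ω and h₁,…,hₙ ∈ Z, then ⋂{Φ_e(h) | h ∈ Z} ≠ ∅. -/

import Mathlib

set_option autoImplicit false

/-! ### First-order syntax -/

structure Signature : Type 1 where
  Func : Type
  farity : Func → ℕ
  Pred : Type
  parity : Pred → ℕ

inductive Term (σ : Signature) : Type where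
  | var : ℕ → Term σ
  | func : (f : σ.Func) → (Fin (σ.farity f) → Term σ) → Term σ

namespace Term
variable {σ : Signature}

def vars : Term σ → Set ℕ
  | .var n => {n}
  | .func _ ts => ⋃ i, (ts i).vars

def subst (x : ℕ) (u : Term σ) : Term σ → Term σ
  | .var n => if n = x then u else .var n
  | .func f ts => .func f (fun i => Term.subst x u (ts i))

end Term

inductive Formula (σ : Signature) : Type where
  | eq : Term σ → Term σ → Formula σ
  | pred : (P : σ.Pred) → (Fin (σ.parity P) → Term σ) → Formula σ
  | neg : Formula σ → Formula σ
  | and : Formula σ → Formula σ → Formula σ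
  | imp : Formula σ → Formula σ → Formula σ
  | all : ℕ → Formula σ → Formula σ

namespace Formula
variable {σ : Signature}

def free : Formula σ → Set ℕ
  | .eq s t => s.vars ∪ t.vars
  | .pred _ ts => ⋃ i, (ts i).vars
  | .neg φ => φ.free
  | .and φ ψ => φ.free ∪ ψ.free
  | .imp φ ψ => φ.free ∪ ψ.free
  | .all x φ => φ.free \ {x}

/-- A sentence is a closed formula. -/
def IsSentence (φ : Formula σ) : Prop := φ.free = ∅

def subst (x : ℕ) (u : Term σ) : Formula σ → Formula σ
  | .eq s t => .eq (Term.subst x u s) (Term.subst x u t)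
  | .pred P ts => .pred P (fun i => Term.subst x u (ts i))
  | .neg φ => .neg (φ.subst x u)
  | .and φ ψ => .and (φ.subst x u) (ψ.subst x u)
  | .imp φ ψ => .imp (φ.subst x u) (ψ.subst x u)
  | .all y φ => if y = x then .all y φ else .all y (φ.subst x u)

def IsLiteral : Formula σ → Prop
  | .eq _ _ => True
  | .pred _ _ => True
  | .neg (.eq _ _) => True
  | .neg (.pred _ _) => True
  | _ => False

/-- `u` is substitutable ("free for") `x` in the given formula. -/
def FreeFor (u : Term σ) (x : ℕ) : Formula σ → Prop
  | .eq _ _ => True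
  | .pred _ _ => True
  | .neg φ => φ.FreeFor u x
  | .and φ ψ => φ.FreeFor u x ∧ ψ.FreeFor u x
  | .imp φ ψ => φ.FreeFor u x ∧ ψ.FreeFor u x
  | .all y φ => x = y ∨ x ∉ (Formula.all y φ).free ∨ (y ∉ u.vars ∧ φ.FreeFor u x)

/-- Conditional-free formulas (the fragment `L⁻`). -/
def ImpFree : Formula σ → Prop
  | .eq _ _ => True
  | .pred _ _ => True
  | .neg φ => φ.ImpFree
  | .and φ ψ => φ.ImpFree ∧ ψ.ImpFree
  | .imp _ _ => False
  | .all _ φ => φ.ImpFree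

/-- A canonical falsum: `∀x ¬(x = x)`. -/
def bot : Formula σ := .all 0 (.neg (.eq (.var 0) (.var 0)))

def iffF (φ ψ : Formula σ) : Formula σ := .and (.imp φ ψ) (.imp ψ φ)

def orF (φ ψ : Formula σ) : Formula σ := .neg (.and (.neg φ) (.neg ψ))

end Formula

/-! ### Strong Kleene interpretations and supervaluation structures -/

/-- A (partial, strong Kleene) interpretation on a domain `D`. -/
structure PInterp (σ : Signature) (D : Type) : Type where
  func : (f : σ.Func) → (Fin (σ.farity f) → D) → D
  pos : (P : σ.Pred) → Set (Fin (σ.parity P) → D)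
  neg : (P : σ.Pred) → Set (Fin (σ.parity P) → D)

namespace PInterp
variable {σ : Signature} {D : Type}

def Consistent (I : PInterp σ D) : Prop := ∀ P, I.pos P ∩ I.neg P = ∅

/-- Informational extension of interpretations. -/
def le (I J : PInterp σ D) : Prop := ∀ P, I.pos P ⊆ J.pos P ∧ I.neg P ⊆ J.neg P

end PInterp

def Term.val {σ : Signature} {D : Type} (I : PInterp σ D) (β : ℕ → D) : Term σ → D
  | .var n => β n
  | .func f ts => I.func f (fun i => (ts i).val I β)

section Sat
variable {σ : Signature} {D : Type} {ι : Type}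

/- Strong Kleene supervaluation satisfaction (truth, `SatP`) and falsity (`SatN`),
indexed by an abstract collection `ι` of points, an admissibility relation `R` on them
and an interpretation map `int`. -/
mutual
  def SatP (R : ι → ι → Prop) (int : ι → PInterp σ D) (w : ι) (β : ℕ → D) : Formula σ → Prop
    | .eq s t => s.val (int w) β = t.val (int w) β
    | .pred P ts => (fun i => (ts i).val (int w) β) ∈ (int w).pos P
    | .neg φ => SatN R int w β φ
    | .and φ ψ => SatP R int w β φ ∧ SatP R int w β ψ
    | .imp φ ψ => ∀ w', R w w' → SatP R int w' β φ → SatP R int w' β ψ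
    | .all x φ => ∀ d : D, SatP R int w (Function.update β x d) φ
  def SatN (R : ι → ι → Prop) (int : ι → PInterp σ D) (w : ι) (β : ℕ → D) : Formula σ → Prop
    | .eq s t => ¬ s.val (int w) β = t.val (int w) β
    | .pred P ts => (fun i => (ts i).val (int w) β) ∈ (int w).neg P
    | .neg φ => SatP R int w β φ
    | .and φ ψ => SatN R int w β φ ∨ SatN R int w β ψ
    | .imp φ ψ => SatP R int w β φ ∧ SatN R int w β ψ
    | .all x φ => ∃ d : D, SatN R int w (Function.update β x d) φ
end

end Sat

/-- A (strong Kleene) supervaluation structure. -/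
structure SupStructure (σ : Signature) (D : Type) where
  X : Set (PInterp σ D)
  H : PInterp σ D → PInterp σ D → Prop
  nonemptyD : Nonempty D
  agree : ∀ I ∈ X, ∀ J ∈ X, I.func = J.func
  Hmem : ∀ {I J : PInterp σ D}, H I J → I ∈ X ∧ J ∈ X
  Hrefl : ∀ I ∈ X, H I I
  Htrans : ∀ {I J K : PInterp σ D}, H I J → H J K → H I K
  Hle : ∀ {I J : PInterp σ D}, H I J → I.le J
  consistent : ∀ I ∈ X, I.Consistent

/-- Truth in a supervaluation structure at an interpretation under an assignment. -/
def SupStructure.Sat {σ : Signature} {D : Type} (M : SupStructure σ D)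
    (J : PInterp σ D) (β : ℕ → D) (φ : Formula σ) : Prop :=
  SatP M.H id J β φ

/-! ### The truth language `L_T` -/

/-- The signature `σ.T` extends `σ` by a unary truth predicate (the `none` predicate). -/
def Signature.T (σ : Signature) : Signature where
  Func := σ.Func
  farity := σ.farity
  Pred := Option σ.Pred
  parity := fun P => match P with
    | none => 1
    | some P => σ.parity P

def Term.liftT {σ : Signature} : Term σ → Term σ.T
  | .var n => .var n
  | .func f ts => .func (σ := σ.T) f (fun i => Term.liftT (ts i))

/-- The embedding of `L`-formulas into `L_T`-formulas. -/
def Formula.liftT {σ : Signature} : Formula σ → Formula σ.T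
  | .eq s t => .eq s.liftT t.liftT
  | .pred P ts => .pred (σ := σ.T) (some P) (fun i => Term.liftT (ts i))
  | .neg φ => .neg φ.liftT
  | .and φ ψ => .and φ.liftT ψ.liftT
  | .imp φ ψ => .imp φ.liftT ψ.liftT
  | .all x φ => .all x φ.liftT

/-- The truth predicate applied to a term: `T t`. -/
def Formula.Tp {σ : Signature} (t : Term σ.T) : Formula σ.T :=
  .pred (σ := σ.T) none (fun _ => t)

/-- The closed term given by a constant (i.e. `0`-ary function symbol). -/
def constTerm {σ : Signature} (c : σ.Func) (h : σ.farity c = 0) : Term σ :=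
  .func c (fun i => (Fin.cast h i).elim0)

/-! ### Valuations, basicness and admissibility -/

/-- A valuation assigns a set of `L_T`-sentences to every interpretation. -/
abbrev Val (σ : Signature) (D : Type) := PInterp σ D → Set (Formula σ.T)

/-- The pointwise ordering of valuations (on the interpretations of the structure). -/
def Val.le {σ : Signature} {D : Type} (M : SupStructure σ D) (f g : Val σ D) : Prop :=
  ∀ J ∈ M.X, f J ⊆ g J

/-- A basic valuation: consistent, sound for `L`-sentences and monotone along `H`. -/
structure IsBasic {σ : Signature} {D : Type} (M : SupStructure σ D) (f : Val σ D) : Prop where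
  sent : ∀ J ∈ M.X, ∀ φ ∈ f J, Formula.IsSentence φ
  consistent : ∀ J ∈ M.X, ∀ φ, φ ∈ f J → Formula.neg φ ∉ f J
  sound : ∀ J ∈ M.X, ∀ ψ : Formula σ, ψ.liftT ∈ f J → ∀ β, M.Sat J β ψ
  mono : ∀ {J J' : PInterp σ D}, M.H J J' → f J ⊆ f J'

/-- An admissibility condition on valuations. -/
structure IsAdmCond {σ : Signature} {D : Type} (M : SupStructure σ D)
    (Φ : Val σ D → Set (Val σ D)) : Prop where
  basic : ∀ {f g : Val σ D}, g ∈ Φ f → IsBasic M g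
  empty : ∀ f : Val σ D, ¬ IsBasic M f → Φ f = ∅
  anti : ∀ {f g : Val σ D}, IsBasic M f → Val.le M f g → Φ g ⊆ Φ f
  le_of_mem : ∀ {f g : Val σ D}, g ∈ Φ f → Val.le M f g

/-- The truth interpretation `J_f`: it interprets the truth predicate by `S`
(via the coding `code` of sentences into the domain) and otherwise agrees with `J`. -/
def truthInterp {σ : Signature} {D : Type} (code : Formula σ.T → D)
    (J : PInterp σ D) (S : Set (Formula σ.T)) : PInterp σ.T D where
  func := J.func
  pos := fun P => match P with
    | none => {v | ∃ φ ∈ S, v = fun _ => code φ}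
    | some P => J.pos P
  neg := fun P => match P with
    | none => {v | ∃ φ : Formula σ.T, Formula.neg φ ∈ S ∧ v = fun _ => code φ}
    | some P => J.neg P

/-- Worlds of a truth structure: pairs of an interpretation and a valuation. -/
abbrev TWorld (σ : Signature) (D : Type) := PInterp σ D × Val σ D

/-- The admissibility relation `H_Φ` on truth interpretations, restricted to `X × Y`. -/
def HPhi {σ : Signature} {D : Type} (M : SupStructure σ D) (Φ : Val σ D → Set (Val σ D))
    (Y : Set (Val σ D)) : TWorld σ D → TWorld σ D → Prop :=
  fun p q => p.2 ∈ Y ∧ q.2 ∈ Y ∧ M.H p.1 q.1 ∧ q.2 ∈ Φ p.2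

/-- Satisfaction in the truth structure `(D, X × Y, H_Φ)` at the truth interpretation `J_f`. -/
def TSat {σ : Signature} {D : Type} (M : SupStructure σ D) (Φ : Val σ D → Set (Val σ D))
    (code : Formula σ.T → D) (Y : Set (Val σ D)) (J : PInterp σ D) (f : Val σ D)
    (β : ℕ → D) (φ : Formula σ.T) : Prop :=
  SatP (HPhi M Φ Y) (fun p : TWorld σ D => truthInterp code p.1 (p.2 p.1)) (J, f) β φ

/-! ### The operations `θ` and `Θ`, grounded truth sets -/

/-- The jump `θ_M^Φ(Y, f)`: the valuation collecting the sentences true at `J_f`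
in the truth structure `(D, X × Y, H_Φ)`. -/
def theta {σ : Signature} {D : Type} (M : SupStructure σ D) (Φ : Val σ D → Set (Val σ D))
    (code : Formula σ.T → D) (Y : Set (Val σ D)) (f : Val σ D) : Val σ D :=
  fun J => {φ | Formula.IsSentence φ ∧ ∀ β, TSat M Φ code Y J f β φ}

/-- The operation `Θ_M^Φ(Y_f)`. -/
def Theta {σ : Signature} {D : Type} (M : SupStructure σ D) (Φ : Val σ D → Set (Val σ D))
    (code : Formula σ.T → D) (Y : Set (Val σ D)) (f : Val σ D) : Set (Val σ D) :=
  {g | g ∈ Y ∧ Val.le M (theta M Φ code Y f) g}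

/-- `Y` is a grounded truth set with `≤`-minimal element `f`. -/
def Grounded {σ : Signature} {D : Type} (M : SupStructure σ D) (Φ : Val σ D → Set (Val σ D))
    (Y : Set (Val σ D)) (f : Val σ D) : Prop :=
  (∀ g ∈ Y, IsBasic M g) ∧ f ∈ Y ∧ (∀ g ∈ Y, Val.le M f g) ∧ (Y ∩ Φ f).Nonempty

/-- `Y ∈ Adm_M`: `Y` is a grounded truth set (for some minimal valuation). -/
def IsAdm {σ : Signature} {D : Type} (M : SupStructure σ D) (Φ : Val σ D → Set (Val σ D))
    (Y : Set (Val σ D)) : Prop :=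
  ∃ f, Grounded M Φ Y f

/-! ### Sequent calculi: `K3`, `N3` (flag `hImp`) and `K3T` (flag `hT`) -/

/-- Sequent derivability for the logics of the paper, over the language `L_T`.
`hImp = true` adds the `N3` conditional rules, `hT = true` adds the naive truth rules
(`qt φ` is the quotation name `⌜φ⌝`).  Identity is classical throughout. -/
inductive Deriv {σ : Signature} (qt : Formula σ.T → Term σ.T) (hImp hT : Bool) :
    Set (Formula σ.T) → Set (Formula σ.T) → Prop where
  | ax {Γ Δ : Set (Formula σ.T)} {φ} : φ.IsLiteral →
      Deriv qt hImp hT (insert φ Γ) (insert φ Δ)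
  | cut {Γ Δ φ} : Deriv qt hImp hT Γ (insert φ Δ) → Deriv qt hImp hT (insert φ Γ) Δ →
      Deriv qt hImp hT Γ Δ
  | negL {Γ Δ χ} : χ.IsLiteral → Deriv qt hImp hT Γ (insert χ Δ) →
      Deriv qt hImp hT (insert (.neg χ) Γ) Δ
  | dnL {Γ Δ φ} : Deriv qt hImp hT (insert φ Γ) Δ →
      Deriv qt hImp hT (insert (.neg (.neg φ)) Γ) Δ
  | dnR {Γ Δ φ} : Deriv qt hImp hT Γ (insert φ Δ) →
      Deriv qt hImp hT Γ (insert (.neg (.neg φ)) Δ)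
  | nconjL {Γ Δ φ ψ} : Deriv qt hImp hT (insert (.neg φ) Γ) Δ →
      Deriv qt hImp hT (insert (.neg ψ) Γ) Δ →
      Deriv qt hImp hT (insert (.neg (.and φ ψ)) Γ) Δ
  | nconjR₁ {Γ Δ φ ψ} : Deriv qt hImp hT Γ (insert (.neg φ) Δ) →
      Deriv qt hImp hT Γ (insert (.neg (.and φ ψ)) Δ)
  | nconjR₂ {Γ Δ φ ψ} : Deriv qt hImp hT Γ (insert (.neg ψ) Δ) →
      Deriv qt hImp hT Γ (insert (.neg (.and φ ψ)) Δ)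
  | conjL₁ {Γ Δ φ ψ} : Deriv qt hImp hT (insert φ Γ) Δ →
      Deriv qt hImp hT (insert (.and φ ψ) Γ) Δ
  | conjL₂ {Γ Δ φ ψ} : Deriv qt hImp hT (insert ψ Γ) Δ →
      Deriv qt hImp hT (insert (.and φ ψ) Γ) Δ
  | conjR {Γ Δ φ ψ} : Deriv qt hImp hT Γ (insert φ Δ) → Deriv qt hImp hT Γ (insert ψ Δ) →
      Deriv qt hImp hT Γ (insert (.and φ ψ) Δ)
  | nallL {Γ Δ} {v y : ℕ} {φ : Formula σ.T} :
      (∀ ψ ∈ Γ, y ∉ Formula.free ψ) → (∀ ψ ∈ Δ, y ∉ Formula.free ψ) →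
      y ∉ (Formula.all v φ).free → φ.FreeFor (.var y) v →
      Deriv qt hImp hT (insert (.neg (φ.subst v (.var y))) Γ) Δ →
      Deriv qt hImp hT (insert (.neg (.all v φ)) Γ) Δ
  | nallR {Γ Δ} {v : ℕ} {t : Term σ.T} {φ : Formula σ.T} : φ.FreeFor t v →
      Deriv qt hImp hT Γ (insert (.neg (φ.subst v t)) (insert (.neg (.all v φ)) Δ)) →
      Deriv qt hImp hT Γ (insert (.neg (.all v φ)) Δ)
  | allL {Γ Δ} {v : ℕ} {t : Term σ.T} {φ : Formula σ.T} : φ.FreeFor t v →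
      Deriv qt hImp hT (insert (φ.subst v t) (insert (.all v φ) Γ)) Δ →
      Deriv qt hImp hT (insert (.all v φ) Γ) Δ
  | allR {Γ Δ} {v y : ℕ} {φ : Formula σ.T} :
      (∀ ψ ∈ Γ, y ∉ Formula.free ψ) → (∀ ψ ∈ Δ, y ∉ Formula.free ψ) →
      y ∉ (Formula.all v φ).free → φ.FreeFor (.var y) v →
      Deriv qt hImp hT Γ (insert (φ.subst v (.var y)) Δ) →
      Deriv qt hImp hT Γ (insert (.all v φ) Δ)
  | idRefl {Γ Δ t} : Deriv qt hImp hT (insert (.eq t t) Γ) Δ → Deriv qt hImp hT Γ Δ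
  | idNeqR {Γ Δ s t} : Deriv qt hImp hT (insert (.eq s t) Γ) Δ →
      Deriv qt hImp hT Γ (insert (.neg (.eq s t)) Δ)
  | idRep {Γ Δ} {x : ℕ} {s t : Term σ.T} {φ : Formula σ.T} : φ.FreeFor s x → φ.FreeFor t x →
      Deriv qt hImp hT (insert (φ.subst x t) Γ) Δ →
      Deriv qt hImp hT (insert (.eq s t) (insert (φ.subst x s) Γ)) Δ
  | nimpL₁ {Γ Δ φ ψ} : hImp = true → Deriv qt hImp hT (insert φ Γ) Δ →
      Deriv qt hImp hT (insert (.neg (.imp φ ψ)) Γ) Δ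
  | nimpL₂ {Γ Δ φ ψ} : hImp = true → Deriv qt hImp hT (insert (.neg ψ) Γ) Δ →
      Deriv qt hImp hT (insert (.neg (.imp φ ψ)) Γ) Δ
  | nimpR {Γ Δ φ ψ} : hImp = true → Deriv qt hImp hT Γ (insert φ Δ) →
      Deriv qt hImp hT Γ (insert (.neg ψ) Δ) →
      Deriv qt hImp hT Γ (insert (.neg (.imp φ ψ)) Δ)
  | impL {Γ Δ φ ψ} : hImp = true → Deriv qt hImp hT Γ (insert φ Δ) →
      Deriv qt hImp hT (insert ψ Γ) Δ →
      Deriv qt hImp hT (insert (.imp φ ψ) Γ) Δ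
  | impR {Γ Δ φ ψ} : hImp = true → Deriv qt hImp hT (insert φ Γ) {ψ} →
      Deriv qt hImp hT Γ (insert (.imp φ ψ) Δ)
  | tL {Γ Δ φ} : hT = true → Deriv qt hImp hT (insert φ Γ) Δ →
      Deriv qt hImp hT (insert (.Tp (qt φ)) Γ) Δ
  | tR {Γ Δ φ} : hT = true → Deriv qt hImp hT Γ (insert φ Δ) →
      Deriv qt hImp hT Γ (insert (.Tp (qt φ)) Δ)
  | tnL {Γ Δ φ} : hT = true → Deriv qt hImp hT (insert (.neg φ) Γ) Δ →
      Deriv qt hImp hT (insert (.neg (.Tp (qt φ))) Γ) Δ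
  | tnR {Γ Δ φ} : hT = true → Deriv qt hImp hT Γ (insert (.neg φ) Δ) →
      Deriv qt hImp hT Γ (insert (.neg (.Tp (qt φ))) Δ)

/-- A set of `L_T`-sentences is saturated for the given calculus. -/
def SatSet {σ : Signature} (qt : Formula σ.T → Term σ.T) (hImp hT : Bool)
    (S : Set (Formula σ.T)) : Prop :=
  ∀ Γ Δ : Set (Formula σ.T), Γ.Finite → Γ ⊆ S → Deriv qt hImp hT Γ Δ → (Δ ∩ S).Nonempty

/-- A valuation is `L`-saturated iff all its values are. -/
def ValSaturated {σ : Signature} {D : Type} (M : SupStructure σ D)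
    (qt : Formula σ.T → Term σ.T) (hImp hT : Bool) (f : Val σ D) : Prop :=
  ∀ J ∈ M.X, SatSet qt hImp hT (f J)

/-- The four admissibility conditions of the paper. -/
inductive AdmE : Type
  | c | k3 | n3 | nve

/-- `Φ_c`, `Φ_K3`, `Φ_N3` and `Φ_Nve`. -/
def PhiE {σ : Signature} {D : Type} (M : SupStructure σ D) (qt : Formula σ.T → Term σ.T) :
    AdmE → Val σ D → Set (Val σ D)
  | .c, f => {g | IsBasic M f ∧ IsBasic M g ∧ Val.le M f g}
  | .k3, f => {g | IsBasic M f ∧ IsBasic M g ∧ Val.le M f g ∧ ValSaturated M qt false false g}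
  | .n3, f => {g | IsBasic M f ∧ IsBasic M g ∧ Val.le M f g ∧ ValSaturated M qt true false g}
  | .nve, f => {g | IsBasic M f ∧ IsBasic M g ∧ Val.le M f g ∧ ValSaturated M qt false true g}

/-- `B^T_M`: basic valuations whose values are `K3`-saturated and whose conditional-free
parts are `K3T`-saturated. -/
def BT {σ : Signature} {D : Type} (M : SupStructure σ D) (qt : Formula σ.T → Term σ.T) :
    Set (Val σ D) :=
  {f | IsBasic M f ∧ ∀ J ∈ M.X,
    SatSet qt false true {φ | φ ∈ f J ∧ φ.ImpFree} ∧ SatSet qt false false (f J)}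

/-! ### The Kripke jump `K` and the valuation `f_k` -/

/-- Membership condition for the one-step strong Kleene truth jump `K` relative to `J`. -/
def KMem {σ : Signature} {D : Type} (J : PInterp σ D) (code : Formula σ.T → D)
    (β₀ : ℕ → D) (S : Set (Formula σ.T)) : Formula σ.T → Prop
  | .eq s t => Term.val (truthInterp code J ∅) β₀ s = Term.val (truthInterp code J ∅) β₀ t
  | .pred none ts => ∃ ψ ∈ S,
      (fun i => Term.val (truthInterp code J ∅) β₀ (ts i)) = fun _ => code ψ
  | .pred (some P) ts => (fun i => Term.val (truthInterp code J ∅) β₀ (ts i)) ∈ J.pos P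
  | .neg (.eq s t) =>
      ¬ Term.val (truthInterp code J ∅) β₀ s = Term.val (truthInterp code J ∅) β₀ t
  | .neg (.pred none ts) => ∃ ψ : Formula σ.T, Formula.neg ψ ∈ S ∧
      (fun i => Term.val (truthInterp code J ∅) β₀ (ts i)) = fun _ => code ψ
  | .neg (.pred (some P) ts) => (fun i => Term.val (truthInterp code J ∅) β₀ (ts i)) ∈ J.neg P
  | .neg (.neg φ) => φ ∈ S
  | .neg (.and φ ψ) => Formula.neg φ ∈ S ∨ Formula.neg ψ ∈ S
  | .neg (.imp _ _) => False
  | .neg (.all v φ) => ∃ (c : σ.Func) (h : σ.farity c = 0),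
      Formula.neg (φ.subst v (constTerm (σ := σ.T) c h)) ∈ S
  | .and φ ψ => φ ∈ S ∧ ψ ∈ S
  | .imp _ _ => False
  | .all v φ => ∀ (c : σ.Func) (h : σ.farity c = 0), φ.subst v (constTerm (σ := σ.T) c h) ∈ S

/-- The strong Kleene truth jump relative to `J`. -/
def KJump {σ : Signature} {D : Type} (J : PInterp σ D) (code : Formula σ.T → D)
    (β₀ : ℕ → D) (S : Set (Formula σ.T)) : Set (Formula σ.T) :=
  {φ | Formula.IsSentence φ ∧ KMem J code β₀ S φ}

/-- The valuation `f_k`: at each interpretation `J` it is the minimal fixed point of the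
strong Kleene truth jump over the `K3`-truths of `J`. -/
noncomputable def fk {σ : Signature} {D : Type} (M : SupStructure σ D)
    (code : Formula σ.T → D) : Val σ D :=
  fun J => ⋂₀ {S | KJump J code (fun _ => M.nonemptyD.some) S ⊆ S}

/-! ### Compactness, coding assumptions and Kripkean truth structures -/

/-- `Φ` is compact on `Y`. -/
def CompactOn {σ : Signature} {D : Type} (Φ : Val σ D → Set (Val σ D))
    (Y : Set (Val σ D)) : Prop :=
  ∀ Z ⊆ Y, (∀ (n : ℕ) (h : Fin n → Val σ D), (∀ i, h i ∈ Z) → (⋂ i, Φ (h i)).Nonempty) →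
    (⋂ g ∈ Z, Φ g).Nonempty

/-- Standing assumptions on the coding apparatus: `code φ` is the denotation of the
quotation name `⌜φ⌝ = qt φ`, names are closed and denote rigidly, distinct sentences have
distinct codes, and every element of the domain is named by a constant. -/
structure GoodCoding {σ : Signature} {D : Type} (M : SupStructure σ D)
    (code : Formula σ.T → D) (qt : Formula σ.T → Term σ.T) : Prop where
  inj : Function.Injective code
  closed : ∀ φ, (qt φ).vars = ∅
  val : ∀ (φ : Formula σ.T) (J : PInterp σ D) (S : Set (Formula σ.T)) (β : ℕ → D),
      Term.val (truthInterp code J S) β (qt φ) = code φ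
  names : ∀ d : D, ∃ (c : σ.Func) (h : σ.farity c = 0),
      ∀ (J : PInterp σ D) (S : Set (Formula σ.T)) (β : ℕ → D),
        Term.val (truthInterp code J S) β (constTerm (σ := σ.T) c h) = d

/-- A Kripkean truth structure: a grounded truth structure with `Y ⊆ B^T_M` whose
minimal valuation is a fixed point of `θ` and whose truth set is a fixed point of `Θ`. -/
def IsKripkean {σ : Signature} {D : Type} (M : SupStructure σ D)
    (Φ : Val σ D → Set (Val σ D)) (code : Formula σ.T → D) (qt : Formula σ.T → Term σ.T)
    (Y : Set (Val σ D)) (f : Val σ D) : Prop :=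
  Grounded M Φ Y f ∧ Y ⊆ BT M qt ∧ theta M Φ code Y f = f ∧ Theta M Φ code Y f = Y

/-- A naive valuation (relative to the quotation function `qt`). -/
def NaiveVal {σ : Signature} {D : Type} (M : SupStructure σ D)
    (qt : Formula σ.T → Term σ.T) (g : Val σ D) : Prop :=
  ∀ J ∈ M.X, ∀ φ : Formula σ.T,
    (φ ∈ g J ↔ Formula.Tp (qt φ) ∈ g J) ∧
    (Formula.neg φ ∈ g J ↔ Formula.neg (Formula.Tp (qt φ)) ∈ g J)

/-- The admissibility condition `Φ_{N3-Nve}` requiring admissible precisifications to be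
`N3`-saturated and naive. -/
def PhiN3Nve {σ : Signature} {D : Type} (M : SupStructure σ D)
    (qt : Formula σ.T → Term σ.T) (f : Val σ D) : Set (Val σ D) :=
  {g | IsBasic M f ∧ IsBasic M g ∧ Val.le M f g ∧
    ValSaturated M qt true false g ∧ NaiveVal M qt g}

/-- `(Y, f)` is `θ^Φ`-sound. -/
def ThetaSound {σ : Signature} {D : Type} (M : SupStructure σ D)
    (Φ : Val σ D → Set (Val σ D)) (code : Formula σ.T → D)
    (Y : Set (Val σ D)) (f : Val σ D) : Prop :=
  Y = {g | IsBasic M g ∧ Val.le M f g} ∧ CompactOn Φ Y ∧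
    Val.le M f (theta M Φ code Y f) ∧
    ∀ g ∈ Y, Val.le M g (theta M Φ code Y g) → theta M Φ code Y g ∈ Y →
      (Y ∩ Φ (theta M Φ code Y g)).Nonempty

/-- `A ⊆ ℕ` is `Π¹₁` (via Kleene's normal form). -/
def IsPi11 (A : Set ℕ) : Prop :=
  ∃ R : List ℕ → ℕ → Bool, Computable₂ R ∧
    ∀ n, n ∈ A ↔ ∀ l : ℕ → ℕ, ∃ k₀ : ℕ, ∀ k ≥ k₀, R ((List.range k).map l) n = false

/-! ### Transfinite iteration of `θ` and `Θ` -/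

open Classical in
/-- The simultaneous transfinite iteration `α ↦ (θ^α(Y_f, f), Θ^α(Y_f))`. -/
noncomputable def iter {σ : Signature} {D : Type} (M : SupStructure σ D)
    (Φ : Val σ D → Set (Val σ D)) (code : Formula σ.T → D)
    (Y₀ : Set (Val σ D)) (f₀ : Val σ D) (α : Ordinal.{0}) :
    Val σ D × Set (Val σ D) :=
  Ordinal.limitRecOn α (f₀, Y₀)
    (fun _ p =>
      letI t := theta M Φ code p.2 p.1
      (t, if IsAdm M Φ p.2 then {g | g ∈ p.2 ∧ Val.le M t g} else ∅))
    (fun o _ ih =>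
      letI t : Val σ D := fun J => ⋃ (β : {β : Ordinal.{0} // β < o}), (ih β.1 β.2).1 J
      (t, {g | (∀ β : Ordinal.{0}, ∀ h : β < o, g ∈ (ih β h).2) ∧ Val.le M t g}))
namespace CompactAux

open Set

lemma insert_inter_eq {α : Type*} {χ : α} {Δ' Δ : Set α} (h1 : χ ∈ Δ') (h2 : Δ' ⊆ insert χ Δ) :
    insert χ (Δ' ∩ Δ) = Δ' := by
  apply Set.Subset.antisymm
  · rintro x (rfl | ⟨hx, _⟩)
    · exact h1
    · exact hx
  · intro x hx
    rcases h2 hx with rfl | hxd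
    · exact Set.mem_insert _ _
    · exact Set.mem_insert_of_mem _ ⟨hx, hxd⟩

lemma subset_insert_of_diff {α : Type*} {χ' : α} {Δ₁ Δ' : Set α} (h : Δ₁ \ {χ'} ⊆ Δ') :
    Δ₁ ⊆ insert χ' Δ' := by
  intro x hx
  by_cases hx' : x = χ'
  · exact hx' ▸ Set.mem_insert _ _
  · exact Set.mem_insert_of_mem _ (h ⟨hx, hx'⟩)

/-- The finitization property for a sequent `Γ ⇒ Δ`. -/
def P {σ : Signature} (qt : Formula σ.T → Term σ.T) (hImp hT : Bool)
    (Γ Δ : Set (Formula σ.T)) : Prop :=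
  ∃ Δ₀ : Set (Formula σ.T), Δ₀.Finite ∧ Δ₀ ⊆ Δ ∧
    ∀ Δ', Δ₀ ⊆ Δ' → Δ' ⊆ Δ → Deriv qt hImp hT Γ Δ'

section Helpers

variable {σ : Signature} {qt : Formula σ.T → Term σ.T} {hImp hT : Bool}

/-- Left rules: `Δ` unchanged. -/
lemma P.l0 {Γp Γc Δ : Set (Formula σ.T)}
    (rule : ∀ Δr ⊆ Δ, Deriv qt hImp hT Γp Δr → Deriv qt hImp hT Γc Δr)
    (ih : P qt hImp hT Γp Δ) : P qt hImp hT Γc Δ := by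
  obtain ⟨Δ₁, hf, hs, hd⟩ := ih
  exact ⟨Δ₁, hf, hs, fun Δ' h₀ h' => rule Δ' h' (hd Δ' h₀ h')⟩

/-- Two-premise left rules: `Δ` unchanged. -/
lemma P.l0₂ {Γp Γp' Γc Δ : Set (Formula σ.T)}
    (rule : ∀ Δr ⊆ Δ, Deriv qt hImp hT Γp Δr → Deriv qt hImp hT Γp' Δr →
      Deriv qt hImp hT Γc Δr)
    (ih : P qt hImp hT Γp Δ) (ih' : P qt hImp hT Γp' Δ) : P qt hImp hT Γc Δ := by
  obtain ⟨Δ₁, hf, hs, hd⟩ := ih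
  obtain ⟨Δ₂, hf', hs', hd'⟩ := ih'
  exact ⟨Δ₁ ∪ Δ₂, hf.union hf', Set.union_subset hs hs',
    fun Δ' h₀ h' => rule Δ' h'
      (hd Δ' (Set.Subset.trans Set.subset_union_left h₀) h')
      (hd' Δ' (Set.Subset.trans Set.subset_union_right h₀) h')⟩

/-- Right rules with a single premise: premise inserts `χ'`, conclusion inserts `χ`. -/
lemma P.r1 {Γp Γc Δ : Set (Formula σ.T)} {χ χ' : Formula σ.T}
    (rule : ∀ Δr ⊆ Δ, Deriv qt hImp hT Γp (insert χ' Δr) → Deriv qt hImp hT Γc (insert χ Δr))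
    (ih : P qt hImp hT Γp (insert χ' Δ)) : P qt hImp hT Γc (insert χ Δ) := by
  obtain ⟨Δ₁, hf, hs, hd⟩ := ih
  refine ⟨insert χ (Δ₁ \ {χ'}), (hf.diff).insert _, ?_, ?_⟩
  · apply Set.insert_subset_insert
    rintro x ⟨hx, hx'⟩
    rcases hs hx with h | h
    · exact absurd h hx'
    · exact h
  · intro Δ' h₀ h'
    have hχ : χ ∈ Δ' := h₀ (Set.mem_insert _ _)
    rw [← insert_inter_eq hχ h']
    refine rule _ Set.inter_subset_right (hd _ ?_ (Set.insert_subset_insert Set.inter_subset_right))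
    apply subset_insert_of_diff
    rintro x ⟨hx, hx'⟩
    refine ⟨h₀ (Set.mem_insert_of_mem _ ⟨hx, hx'⟩), ?_⟩
    rcases hs hx with h | h
    · exact absurd h hx'
    · exact h

/-- Right rules with two premises. -/
lemma P.r2 {Γp Γp' Γc Δ : Set (Formula σ.T)} {χ χ₁ χ₂ : Formula σ.T}
    (rule : ∀ Δr ⊆ Δ, Deriv qt hImp hT Γp (insert χ₁ Δr) →
      Deriv qt hImp hT Γp' (insert χ₂ Δr) → Deriv qt hImp hT Γc (insert χ Δr))
    (ih : P qt hImp hT Γp (insert χ₁ Δ)) (ih' : P qt hImp hT Γp' (insert χ₂ Δ)) :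
    P qt hImp hT Γc (insert χ Δ) := by
  obtain ⟨Δ₁, hf, hs, hd⟩ := ih
  obtain ⟨Δ₂, hf', hs', hd'⟩ := ih'
  refine ⟨insert χ ((Δ₁ \ {χ₁}) ∪ (Δ₂ \ {χ₂})), ((hf.diff).union (hf'.diff)).insert _, ?_, ?_⟩
  · apply Set.insert_subset_insert
    rintro x (⟨hx, hx'⟩ | ⟨hx, hx'⟩)
    · rcases hs hx with h | h
      · exact absurd h hx'
      · exact h
    · rcases hs' hx with h | h
      · exact absurd h hx'
      · exact h
  · intro Δ' h₀ h'
    have hχ : χ ∈ Δ' := h₀ (Set.mem_insert _ _)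
    rw [← insert_inter_eq hχ h']
    refine rule _ Set.inter_subset_right (hd _ ?_ (Set.insert_subset_insert Set.inter_subset_right))
      (hd' _ ?_ (Set.insert_subset_insert Set.inter_subset_right))
    · apply subset_insert_of_diff
      rintro x ⟨hx, hx'⟩
      refine ⟨h₀ (Set.mem_insert_of_mem _ (Or.inl ⟨hx, hx'⟩)), ?_⟩
      rcases hs hx with h | h
      · exact absurd h hx'
      · exact h
    · apply subset_insert_of_diff
      rintro x ⟨hx, hx'⟩
      refine ⟨h₀ (Set.mem_insert_of_mem _ (Or.inr ⟨hx, hx'⟩)), ?_⟩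
      rcases hs' hx with h | h
      · exact absurd h hx'
      · exact h

/-- Rules whose premise drops the inserted right formula (e.g. `negL`). -/
lemma P.drop {Γp Γc Δ : Set (Formula σ.T)} {χ : Formula σ.T}
    (rule : ∀ Δr ⊆ Δ, Deriv qt hImp hT Γp (insert χ Δr) → Deriv qt hImp hT Γc Δr)
    (ih : P qt hImp hT Γp (insert χ Δ)) : P qt hImp hT Γc Δ := by
  obtain ⟨Δ₁, hf, hs, hd⟩ := ih
  refine ⟨Δ₁ \ {χ}, hf.diff, ?_, ?_⟩
  · rintro x ⟨hx, hx'⟩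
    rcases hs hx with h | h
    · exact absurd h hx'
    · exact h
  · intro Δ' h₀ h'
    refine rule Δ' h' (hd _ ?_ (Set.insert_subset_insert h'))
    exact subset_insert_of_diff fun x hx => h₀ hx

/-- Rules whose premise has plain `Δ` and conclusion inserts `χ` (e.g. `idNeqR`). -/
lemma P.introR {Γp Γc Δ : Set (Formula σ.T)} {χ : Formula σ.T}
    (rule : ∀ Δr ⊆ Δ, Deriv qt hImp hT Γp Δr → Deriv qt hImp hT Γc (insert χ Δr))
    (ih : P qt hImp hT Γp Δ) : P qt hImp hT Γc (insert χ Δ) := by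
  obtain ⟨Δ₁, hf, hs, hd⟩ := ih
  refine ⟨insert χ Δ₁, hf.insert _, Set.insert_subset_insert hs, ?_⟩
  intro Δ' h₀ h'
  have hχ : χ ∈ Δ' := h₀ (Set.mem_insert _ _)
  rw [← insert_inter_eq hχ h']
  exact rule _ Set.inter_subset_right
    (hd _ (Set.subset_inter (fun x hx => h₀ (Set.mem_insert_of_mem _ hx)) hs)
      Set.inter_subset_right)

end Helpers

/-- Every derivable sequent has a finite right part which is derivable, monotonically
within the original right part. -/
lemma deriv_finite {σ : Signature} {qt : Formula σ.T → Term σ.T} {hImp hT : Bool}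
    {Γ Δ : Set (Formula σ.T)} (d : Deriv qt hImp hT Γ Δ) : P qt hImp hT Γ Δ := by
  induction d with
  | @ax Γ Δ φ hlit =>
      refine ⟨{φ}, Set.finite_singleton _, Set.singleton_subset_iff.2 (Set.mem_insert _ _), ?_⟩
      intro Δ' h₀ h'
      have hχ : φ ∈ Δ' := h₀ rfl
      rw [← insert_inter_eq hχ h']
      exact Deriv.ax hlit
  | @cut Γ Δ φ d1 d2 ih1 ih2 =>
      obtain ⟨Δ₁, hf1, hs1, hd1⟩ := ih1
      obtain ⟨Δ₂, hf2, hs2, hd2⟩ := ih2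
      refine ⟨(Δ₁ \ {φ}) ∪ Δ₂, (hf1.diff).union hf2, ?_, ?_⟩
      · apply Set.union_subset _ hs2
        rintro x ⟨hx, hx'⟩
        rcases hs1 hx with h | h
        · exact absurd h hx'
        · exact h
      · intro Δ' h₀ h'
        have e1 : Deriv qt hImp hT Γ (insert φ Δ') := by
          refine hd1 _ ?_ (Set.insert_subset_insert h')
          exact subset_insert_of_diff fun x hx =>
            h₀ (Set.mem_union_left _ hx)
        have e2 : Deriv qt hImp hT (insert φ Γ) Δ' :=
          hd2 Δ' (Set.Subset.trans Set.subset_union_right h₀) h'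
        exact Deriv.cut e1 e2
  | @negL Γ Δ χ hlit d ih =>
      exact P.drop (fun Δr _ h => Deriv.negL hlit h) ih
  | @dnL Γ Δ φ d ih => exact P.l0 (fun Δr _ h => Deriv.dnL h) ih
  | @dnR Γ Δ φ d ih => exact P.r1 (fun Δr _ h => Deriv.dnR h) ih
  | @nconjL Γ Δ φ ψ d1 d2 ih1 ih2 =>
      exact P.l0₂ (fun Δr _ h1 h2 => Deriv.nconjL h1 h2) ih1 ih2
  | @nconjR₁ Γ Δ φ ψ d ih => exact P.r1 (fun Δr _ h => Deriv.nconjR₁ h) ih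
  | @nconjR₂ Γ Δ φ ψ d ih => exact P.r1 (fun Δr _ h => Deriv.nconjR₂ h) ih
  | @conjL₁ Γ Δ φ ψ d ih => exact P.l0 (fun Δr _ h => Deriv.conjL₁ h) ih
  | @conjL₂ Γ Δ φ ψ d ih => exact P.l0 (fun Δr _ h => Deriv.conjL₂ h) ih
  | @conjR Γ Δ φ ψ d1 d2 ih1 ih2 =>
      exact P.r2 (fun Δr _ h1 h2 => Deriv.conjR h1 h2) ih1 ih2
  | @nallL Γ Δ v y φ hΓ hΔ hy hff d ih =>
      exact P.l0 (fun Δr hsub h => Deriv.nallL hΓ (fun ψ hψ => hΔ ψ (hsub hψ)) hy hff h) ih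
  | @nallR Γ Δ v t φ hff d ih =>
      obtain ⟨Δ₁, hf, hs, hd⟩ := ih
      refine ⟨insert (Formula.neg (Formula.all v φ)) (Δ₁ \ {Formula.neg (φ.subst v t)}),
        (hf.diff).insert _, ?_, ?_⟩
      · rw [Set.insert_subset_iff]
        refine ⟨Set.mem_insert _ _, ?_⟩
        rintro x ⟨hx, hx'⟩
        rcases hs hx with h | h
        · exact absurd h hx'
        · exact h
      · intro Δ' h₀ h'
        have hχ : Formula.neg (Formula.all v φ) ∈ Δ' := h₀ (Set.mem_insert _ _)
        have key := insert_inter_eq hχ h'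
        have prem : Deriv qt hImp hT Γ (insert (Formula.neg (φ.subst v t)) Δ') := by
          refine hd _ ?_ (Set.insert_subset_insert h')
          apply subset_insert_of_diff
          rintro x ⟨hx, hx'⟩
          exact h₀ (Set.mem_insert_of_mem _ ⟨hx, hx'⟩)
        rw [← key]
        refine Deriv.nallR hff ?_
        rw [key]
        exact prem
  | @allL Γ Δ v t φ hff d ih => exact P.l0 (fun Δr _ h => Deriv.allL hff h) ih
  | @allR Γ Δ v y φ hΓ hΔ hy hff d ih =>
      exact P.r1 (fun Δr hsub h => Deriv.allR hΓ (fun ψ hψ => hΔ ψ (hsub hψ)) hy hff h) ih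
  | @idRefl Γ Δ t d ih => exact P.l0 (fun Δr _ h => Deriv.idRefl h) ih
  | @idNeqR Γ Δ s t d ih => exact P.introR (fun Δr _ h => Deriv.idNeqR h) ih
  | @idRep Γ Δ x s t φ hffs hfft d ih =>
      exact P.l0 (fun Δr _ h => Deriv.idRep hffs hfft h) ih
  | @nimpL₁ Γ Δ φ ψ hi d ih => exact P.l0 (fun Δr _ h => Deriv.nimpL₁ hi h) ih
  | @nimpL₂ Γ Δ φ ψ hi d ih => exact P.l0 (fun Δr _ h => Deriv.nimpL₂ hi h) ih
  | @nimpR Γ Δ φ ψ hi d1 d2 ih1 ih2 =>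
      exact P.r2 (fun Δr _ h1 h2 => Deriv.nimpR hi h1 h2) ih1 ih2
  | @impL Γ Δ φ ψ hi d1 d2 ih1 ih2 =>
      obtain ⟨Δ₁, hf1, hs1, hd1⟩ := ih1
      obtain ⟨Δ₂, hf2, hs2, hd2⟩ := ih2
      refine ⟨(Δ₁ \ {φ}) ∪ Δ₂, (hf1.diff).union hf2, ?_, ?_⟩
      · apply Set.union_subset _ hs2
        rintro x ⟨hx, hx'⟩
        rcases hs1 hx with h | h
        · exact absurd h hx'
        · exact h
      · intro Δ' h₀ h'
        have e1 : Deriv qt hImp hT Γ (insert φ Δ') := by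
          refine hd1 _ ?_ (Set.insert_subset_insert h')
          exact subset_insert_of_diff fun x hx => h₀ (Set.mem_union_left _ hx)
        have e2 := hd2 Δ' (Set.Subset.trans Set.subset_union_right h₀) h'
        exact Deriv.impL hi e1 e2
  | @impR Γ Δ φ ψ hi d ih =>
      refine ⟨{Formula.imp φ ψ}, Set.finite_singleton _,
        Set.singleton_subset_iff.2 (Set.mem_insert _ _), ?_⟩
      intro Δ' h₀ h'
      have hχ : Formula.imp φ ψ ∈ Δ' := h₀ rfl
      rw [← insert_inter_eq hχ h']
      exact Deriv.impR hi d
  | @tL Γ Δ φ ht d ih => exact P.l0 (fun Δr _ h => Deriv.tL ht h) ih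
  | @tR Γ Δ φ ht d ih => exact P.r1 (fun Δr _ h => Deriv.tR ht h) ih
  | @tnL Γ Δ φ ht d ih => exact P.l0 (fun Δr _ h => Deriv.tnL ht h) ih
  | @tnR Γ Δ φ ht d ih => exact P.r1 (fun Δr _ h => Deriv.tnR ht h) ih

end CompactAux

/-- **Compactness** (Lemma 11 of the paper).  Let `Y^T_{f_k} := {g ∈ B^T_M | f_k ≤ g}`
and `e ∈ {c, K3, N3, Nve}`.  Then `Φ_e` is compact on `Y^T_{f_k}`: for every
`Z ⊆ Y^T_{f_k}`, if every finite family from `Z` has admissible extensions in common,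
then so does all of `Z`. -/
theorem PhiE_compact {σ : Signature} {D : Type} (M : SupStructure σ D)
    (qt : Formula σ.T → Term σ.T) (code : Formula σ.T → D)
    (hgc : GoodCoding M code qt) (e : AdmE)
    (Y : Set (Val σ D)) (hYdef : Y = {g | g ∈ BT M qt ∧ Val.le M (fk M code) g}) :
    CompactOn (PhiE M qt e) Y := by
  have hbasicY : ∀ h ∈ Y, IsBasic M h := by
    intro h hh; rw [hYdef] at hh; exact hh.1.1
  intro Z hZY hfin
  rcases Set.eq_empty_or_nonempty Z with rfl | ⟨h₀, hh₀⟩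
  · refine ⟨fun _ => ∅, ?_⟩
    simp
  -- index type: finite subsets of `Z`
  let I := {s : Set (Val σ D) // s ⊆ Z ∧ s.Finite}
  haveI : Nonempty I := ⟨⟨∅, Set.empty_subset _, Set.finite_empty⟩⟩
  let Fl : Filter I := ⨅ s : I, Filter.principal {t : I | s.1 ⊆ t.1}
  haveI hFl : Fl.NeBot := by
    apply Filter.iInf_neBot_of_directed'
    · intro a b
      refine ⟨⟨a.1 ∪ b.1, Set.union_subset a.2.1 b.2.1, a.2.2.union b.2.2⟩, ?_, ?_⟩
      · exact Filter.principal_mono.2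
          (fun t ht => Set.Subset.trans Set.subset_union_left ht)
      · exact Filter.principal_mono.2
          (fun t ht => Set.Subset.trans Set.subset_union_right ht)
    · intro s
      exact Filter.principal_neBot_iff.2 ⟨s, Set.Subset.rfl⟩
  let U : Ultrafilter I := Ultrafilter.of Fl
  have hU : ∀ s : I, {t : I | s.1 ⊆ t.1} ∈ (U : Filter I) := fun s =>
    Ultrafilter.of_le Fl (Filter.mem_iInf_of_mem s (Filter.mem_principal_self _))
  -- selection of common extensions for finite families
  have hsel : ∀ s : I, ∃ g : Val σ D, ∀ x ∈ s.1, g ∈ PhiE M qt e x := by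
    intro s
    have hfinset := s.2.2
    set L := hfinset.toFinset.toList with hL
    have hmemZ : ∀ i : Fin L.length, L.get i ∈ Z := by
      intro i
      have h1 : L.get i ∈ L := L.get_mem i
      rw [Finset.mem_toList] at h1
      exact s.2.1 (hfinset.mem_toFinset.1 h1)
    obtain ⟨g, hg⟩ := hfin L.length L.get hmemZ
    refine ⟨g, fun x hx => ?_⟩
    have h1 : x ∈ L := Finset.mem_toList.2 (hfinset.mem_toFinset.2 hx)
    obtain ⟨i, hi⟩ := List.mem_iff_get.1 h1
    have h2 := Set.mem_iInter.1 hg i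
    rwa [hi] at h2
  choose G hG using hsel
  have hle_of : ∀ f g : Val σ D, g ∈ PhiE M qt e f → Val.le M f g := by
    intro f g hg
    cases e
    · exact hg.2.2
    · exact hg.2.2.1
    · exact hg.2.2.1
    · exact hg.2.2.1
  have hbasic_of : ∀ f g : Val σ D, g ∈ PhiE M qt e f → IsBasic M g := by
    intro f g hg
    cases e <;> exact hg.2.1
  let g : Val σ D := fun J => {φ | {s : I | φ ∈ G s J} ∈ (U : Filter I)}
  have hmemZU : ∀ h ∈ Z, {s : I | h ∈ s.1} ∈ (U : Filter I) := by
    intro h hh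
    have := hU ⟨{h}, Set.singleton_subset_iff.2 hh, Set.finite_singleton _⟩
    simpa [Set.singleton_subset_iff] using this
  have hS₀ : {s : I | h₀ ∈ s.1} ∈ (U : Filter I) := hmemZU h₀ hh₀
  have hGbasic : ∀ s : I, h₀ ∈ s.1 → IsBasic M (G s) := fun s hs =>
    hbasic_of h₀ (G s) (hG s h₀ hs)
  have hgbasic : IsBasic M g := by
    refine ⟨?_, ?_, ?_, ?_⟩
    · intro J hJ φ hφ
      obtain ⟨s, hs1, hs2⟩ := Filter.nonempty_of_mem (Filter.inter_mem hφ hS₀)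
      exact (hGbasic s hs2).sent J hJ φ hs1
    · intro J hJ φ hφ hneg
      obtain ⟨s, ⟨hs1, hs1'⟩, hs2⟩ :=
        Filter.nonempty_of_mem (Filter.inter_mem (Filter.inter_mem hφ hneg) hS₀)
      exact (hGbasic s hs2).consistent J hJ φ hs1 hs1'
    · intro J hJ ψ hψ β
      obtain ⟨s, hs1, hs2⟩ := Filter.nonempty_of_mem (Filter.inter_mem hψ hS₀)
      exact (hGbasic s hs2).sound J hJ ψ hs1 β
    · intro J J' hH φ hφ
      refine Filter.mem_of_superset (Filter.inter_mem hφ hS₀) ?_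
      rintro s ⟨hs1, hs2⟩
      exact (hGbasic s hs2).mono hH hs1
  have hgle : ∀ h ∈ Z, Val.le M h g := by
    intro h hh J hJ φ hφ
    refine Filter.mem_of_superset (hmemZU h hh) ?_
    intro s hs
    exact hle_of h (G s) (hG s h hs) J hJ hφ
  have hgsat : ∀ b1 b2 : Bool, (∀ s : I, h₀ ∈ s.1 → ValSaturated M qt b1 b2 (G s)) →
      ValSaturated M qt b1 b2 g := by
    intro b1 b2 hGs J hJ Γ Δ hΓfin hΓsub hder
    obtain ⟨Δ₀, hΔ₀fin, hΔ₀sub, hΔ₀der⟩ := CompactAux.deriv_finite hder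
    have hder₀ : Deriv qt b1 b2 Γ Δ₀ := hΔ₀der Δ₀ Set.Subset.rfl hΔ₀sub
    have hA : {s : I | Γ ⊆ G s J} ∈ (U : Filter I) := by
      have hEq : {s : I | Γ ⊆ G s J} = ⋂ γ ∈ Γ, {s : I | γ ∈ G s J} := by
        ext s
        simp [Set.subset_def]
      rw [hEq]
      exact (Filter.biInter_mem hΓfin).2 fun γ hγ => hΓsub hγ
    have hcov : {s : I | Γ ⊆ G s J} ∩ {s : I | h₀ ∈ s.1} ⊆
        ⋃ δ ∈ Δ₀, {s : I | δ ∈ G s J} := by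
      rintro s ⟨hs1, hs2⟩
      obtain ⟨δ, hδ1, hδ2⟩ := hGs s hs2 J hJ Γ Δ₀ hΓfin hs1 hder₀
      exact Set.mem_biUnion hδ1 hδ2
    have hUnion : (⋃ δ ∈ Δ₀, {s : I | δ ∈ G s J}) ∈ (U : Filter I) :=
      Filter.mem_of_superset (Filter.inter_mem hA hS₀) hcov
    obtain ⟨δ, hδ1, hδ2⟩ :=
      (Ultrafilter.finite_biUnion_mem_iff hΔ₀fin).1 (Ultrafilter.mem_coe.1 hUnion)
    exact ⟨δ, hΔ₀sub hδ1, hδ2⟩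
  refine ⟨g, Set.mem_iInter₂.2 fun h hh => ?_⟩
  have hbh : IsBasic M h := hbasicY h (hZY hh)
  cases e with
  | c => exact ⟨hbh, hgbasic, hgle h hh⟩
  | k3 => exact ⟨hbh, hgbasic, hgle h hh,
      hgsat false false fun s hs => (hG s h₀ hs).2.2.2⟩
  | n3 => exact ⟨hbh, hgbasic, hgle h hh,
      hgsat true false fun s hs => (hG s h₀ hs).2.2.2⟩
  | nve => exact ⟨hbh, hgbasic, hgle h hh,
      hgsat false true fun s hs => (hG s h₀ hs).2.2.2⟩
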